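/- Let T > 0 and let u : ℝ × [0,T) → ℝ be a classical periodic solution of the Fornberg–Whitham equation such that, in addition, ∂_x² u and ∂_t ∂_x u exist and are continuous on ℝ × [0,T). Let u₀(x) = u(x,0) and suppose min_{x∈[0,1]} u₀'(x) + max_{x∈[0,1]} u₀'(x) < -2/3. Then T ≤ 2 / (-3 min_{x∈[0,1]} u₀'(x) - 1). -/

import Mathlib

open MeasureTheory

/-- The 1-periodic convolution kernel of `(id - ∂ₓ²)⁻¹` on the circle, on `[0,1)`. -/
noncomputable def FWKernel (y : ℝ) : ℝ :=
  (Real.exp y + Real.exp (1 - y)) / (2 * (Real.exp 1 - 1))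

/-- A classical periodic solution of the Fornberg–Whitham equation on `ℝ × [0,T)`:
`u` is 1-periodic in `x`, has continuous partial derivatives `ux = ∂ₓ u` and
`ut = ∂ₜ u` on `ℝ × [0,T)`, and satisfies
`∂ₜ u + (3/2) u ∂ₓ u = ∫_0^1 K(y) ∂ₓ u(x - y, t) dy`. -/
def IsClassicalFWSolution (T : ℝ) (u ux ut : ℝ → ℝ → ℝ) : Prop :=
  ContinuousOn (fun p : ℝ × ℝ => u p.1 p.2) (Set.univ ×ˢ Set.Ico 0 T) ∧
  (∀ x : ℝ, ∀ t ∈ Set.Ico (0 : ℝ) T, u (x + 1) t = u x t) ∧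
  (∀ x : ℝ, ∀ t ∈ Set.Ico (0 : ℝ) T, HasDerivAt (fun x' => u x' t) (ux x t) x) ∧
  (∀ x : ℝ, ∀ t ∈ Set.Ico (0 : ℝ) T,
    HasDerivWithinAt (fun t' => u x t') (ut x t) (Set.Ico 0 T) t) ∧
  ContinuousOn (fun p : ℝ × ℝ => ux p.1 p.2) (Set.univ ×ˢ Set.Ico 0 T) ∧
  ContinuousOn (fun p : ℝ × ℝ => ut p.1 p.2) (Set.univ ×ˢ Set.Ico 0 T) ∧
  (∀ x : ℝ, ∀ t ∈ Set.Ico (0 : ℝ) T,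
    ut x t + (3 / 2) * u x t * ux x t = ∫ y in (0:ℝ)..1, FWKernel y * ux (x - y) t)


open Set intervalIntegral Filter Topology

noncomputable def FWKd (y : ℝ) : ℝ :=
  (Real.exp y - Real.exp (1 - y)) / (2 * (Real.exp 1 - 1))

lemma e1pos : (0:ℝ) < Real.exp 1 - 1 := by
  linarith [Real.add_one_le_exp (1:ℝ)]

lemma hasDerivAt_FWKernel (y : ℝ) : HasDerivAt FWKernel (FWKd y) y := by
  have h1 : HasDerivAt Real.exp (Real.exp y) y := Real.hasDerivAt_exp y
  have h2 : HasDerivAt (fun y : ℝ => Real.exp (1 - y)) (-Real.exp (1 - y)) y := by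
    have := (Real.hasDerivAt_exp (1 - y)).comp y (((hasDerivAt_id y).const_sub 1))
    exact this.congr_deriv (by ring)
  have := (h1.add h2).div_const (2 * (Real.exp 1 - 1))
  unfold FWKernel FWKd
  exact this.congr_deriv (by ring)

lemma hasDerivAt_FWKd (y : ℝ) : HasDerivAt FWKd (FWKernel y) y := by
  have h1 : HasDerivAt Real.exp (Real.exp y) y := Real.hasDerivAt_exp y
  have h2 : HasDerivAt (fun y : ℝ => Real.exp (1 - y)) (-Real.exp (1 - y)) y := by
    have := (Real.hasDerivAt_exp (1 - y)).comp y (((hasDerivAt_id y).const_sub 1))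
    exact this.congr_deriv (by ring)
  have := (h1.sub h2).div_const (2 * (Real.exp 1 - 1))
  unfold FWKernel FWKd
  exact this.congr_deriv (by ring)

lemma FWKernel_pos (y : ℝ) : 0 < FWKernel y := by
  have := e1pos
  exact div_pos (by positivity) (by linarith)

lemma FWKernel_cont : Continuous FWKernel := by
  unfold FWKernel
  fun_prop

lemma FWKd_cont : Continuous FWKd := by
  unfold FWKd
  fun_prop

lemma FWKernel_le {y : ℝ} (hy : y ∈ Icc (0:ℝ) 1) : FWKernel y ≤ Real.exp 1 := by
  have he := e1pos
  have h2 : (2:ℝ) ≤ Real.exp 1 := by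
    have := Real.add_one_le_exp (1:ℝ); linarith
  have hy1 : Real.exp y ≤ Real.exp 1 := Real.exp_le_exp.mpr hy.2
  have hy2 : Real.exp (1 - y) ≤ Real.exp 1 := Real.exp_le_exp.mpr (by linarith [hy.1])
  rw [FWKernel, div_le_iff₀ (by linarith)]
  nlinarith [Real.exp_pos 1]

lemma FWKernel_one_eq : FWKernel 1 = FWKernel 0 := by
  simp [FWKernel]; ring_nf

lemma FWKd_one : FWKd 1 = 1/2 := by
  have := e1pos
  rw [FWKd]; rw [sub_self, Real.exp_zero]
  field_simp

lemma FWKd_zero : FWKd 0 = -(1/2) := by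
  have := e1pos
  rw [FWKd]; rw [sub_zero, Real.exp_zero]
  field_simp
  ring

lemma integral_FWKernel : ∫ y in (0:ℝ)..1, FWKernel y = 1 := by
  rw [integral_eq_sub_of_hasDerivAt (fun y _ => hasDerivAt_FWKd y)
    (FWKernel_cont.intervalIntegrable 0 1), FWKd_one, FWKd_zero]
  norm_num

lemma integral_id_mul_FWKernel : ∫ y in (0:ℝ)..1, y * FWKernel y = 1/2 := by
  have h : ∀ y ∈ uIcc (0:ℝ) 1, HasDerivAt (fun y => y * FWKd y - FWKernel y) (y * FWKernel y) y := by
    intro y _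
    have := ((hasDerivAt_id y).mul (hasDerivAt_FWKd y)).sub (hasDerivAt_FWKernel y)
    exact this.congr_deriv (by simp only [id_eq, one_mul]; ring)
  rw [integral_eq_sub_of_hasDerivAt h
    ((continuous_id.mul FWKernel_cont).intervalIntegrable 0 1)]
  simp [FWKd_one, FWKd_zero, FWKernel_one_eq]

section util
variable {T : ℝ} {u ux : ℝ → ℝ → ℝ}

lemma slice_x (h : ContinuousOn (fun p : ℝ × ℝ => u p.1 p.2) (Set.univ ×ˢ Set.Ico 0 T))
    {t : ℝ} (ht : t ∈ Ico (0:ℝ) T) : Continuous (fun x => u x t) := by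
  rw [← continuousOn_univ]
  exact h.comp (Continuous.continuousOn (continuous_id.prodMk continuous_const)) (fun x _ => ⟨trivial, ht⟩)

lemma slice_t (h : ContinuousOn (fun p : ℝ × ℝ => u p.1 p.2) (Set.univ ×ˢ Set.Ico 0 T))
    (x : ℝ) : ContinuousOn (fun t => u x t) (Ico (0:ℝ) T) :=
  h.comp (Continuous.continuousOn (continuous_const.prodMk continuous_id)) (fun t htt => ⟨trivial, htt⟩)

lemma ux_periodic
    (hper : ∀ x : ℝ, ∀ t ∈ Set.Ico (0 : ℝ) T, u (x + 1) t = u x t)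
    (hux : ∀ x : ℝ, ∀ t ∈ Set.Ico (0 : ℝ) T, HasDerivAt (fun x' => u x' t) (ux x t) x)
    {t : ℝ} (ht : t ∈ Ico (0:ℝ) T) (x : ℝ) : ux (x + 1) t = ux x t := by
  have hshift : HasDerivAt (fun x' : ℝ => x' + 1) 1 x := (hasDerivAt_id x).add_const 1
  have h0 : HasDerivAt (fun x' => u (x' + 1) t) (ux (x+1) t * 1) x :=
    by have := (hux (x+1) t ht).comp x hshift; exact this
  have heq : (fun x' => u (x' + 1) t) = (fun x' => u x' t) :=
    funext fun x' => hper x' t ht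
  rw [heq] at h0
  have := h0.unique (hux x t ht)
  simpa using this

lemma ux_ge_sInf
    (hper : ∀ x : ℝ, ∀ t ∈ Set.Ico (0 : ℝ) T, u (x + 1) t = u x t)
    (hux : ∀ x : ℝ, ∀ t ∈ Set.Ico (0 : ℝ) T, HasDerivAt (fun x' => u x' t) (ux x t) x)
    (huxc : ContinuousOn (fun p : ℝ × ℝ => ux p.1 p.2) (Set.univ ×ˢ Set.Ico 0 T))
    {t : ℝ} (ht : t ∈ Ico (0:ℝ) T) (x : ℝ) :
    sInf ((fun x => ux x t) '' Icc (0:ℝ) 1) ≤ ux x t := by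
  have hp : Function.Periodic (fun x => ux x t) 1 := fun x => ux_periodic hper hux ht x
  have hfr : ux (Int.fract x) t = ux x t := by
    have h2 := hp.sub_int_mul_eq (x := x) ⌊x⌋
    rw [Int.fract]
    simpa using h2
  rw [← hfr]
  have hcompact : IsCompact ((fun x => ux x t) '' Icc (0:ℝ) 1) :=
    isCompact_Icc.image_of_continuousOn ((slice_x huxc ht).continuousOn)
  exact csInf_le hcompact.bddBelow
    (mem_image_of_mem _ ⟨Int.fract_nonneg x, (Int.fract_lt_one x).le⟩)

lemma exists_min
    (huxc : ContinuousOn (fun p : ℝ × ℝ => ux p.1 p.2) (Set.univ ×ˢ Set.Ico 0 T))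
    {t : ℝ} (ht : t ∈ Ico (0:ℝ) T) :
    ∃ x₀ ∈ Icc (0:ℝ) 1, ux x₀ t = sInf ((fun x => ux x t) '' Icc (0:ℝ) 1) := by
  have hcompact : IsCompact ((fun x => ux x t) '' Icc (0:ℝ) 1) :=
    isCompact_Icc.image_of_continuousOn ((slice_x huxc ht).continuousOn)
  have hne : ((fun x => ux x t) '' Icc (0:ℝ) 1).Nonempty :=
    (nonempty_Icc.mpr zero_le_one).image _
  obtain ⟨x₀, hx₀, hval⟩ := hcompact.sInf_mem hne
  exact ⟨x₀, hx₀, hval⟩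

end util

section part2
variable {T : ℝ} {u ux uxx : ℝ → ℝ → ℝ}

/-- Identity (A): the convolution of K with uxx. -/
lemma conv_uxx_eq
    (hper : ∀ x : ℝ, ∀ t ∈ Set.Ico (0 : ℝ) T, u (x + 1) t = u x t)
    (huc : ContinuousOn (fun p : ℝ × ℝ => u p.1 p.2) (Set.univ ×ˢ Set.Ico 0 T))
    (hux : ∀ x : ℝ, ∀ t ∈ Set.Ico (0 : ℝ) T, HasDerivAt (fun x' => u x' t) (ux x t) x)
    (huxc : ContinuousOn (fun p : ℝ × ℝ => ux p.1 p.2) (Set.univ ×ˢ Set.Ico 0 T))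
    (huxx : ∀ x : ℝ, ∀ t ∈ Set.Ico (0 : ℝ) T, HasDerivAt (fun x' => ux x' t) (uxx x t) x)
    (huxxc : ContinuousOn (fun p : ℝ × ℝ => uxx p.1 p.2) (Set.univ ×ˢ Set.Ico 0 T))
    {t : ℝ} (ht : t ∈ Ico (0:ℝ) T) (x : ℝ) :
    ∫ y in (0:ℝ)..1, FWKernel y * uxx (x - y) t
      = (∫ y in (0:ℝ)..1, FWKernel y * u (x - y) t) - u x t := by
  set Φ : ℝ → ℝ := fun y => FWKernel y * (-(ux (x - y) t)) - FWKd y * u (x - y) t with hΦdef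
  have hderiv : ∀ y ∈ uIcc (0:ℝ) 1,
      HasDerivAt Φ (FWKernel y * uxx (x - y) t - FWKernel y * u (x - y) t) y := by
    intro y _
    have hsub : HasDerivAt (fun y : ℝ => x - y) (-1) y := (hasDerivAt_id y).const_sub x
    have d1 : HasDerivAt (fun y => u (x - y) t) (-(ux (x - y) t)) y := by
      have := (hux (x - y) t ht).comp y hsub
      exact this.congr_deriv (by ring)
    have d2 : HasDerivAt (fun y => -(ux (x - y) t)) (uxx (x - y) t) y := by
      have := ((huxx (x - y) t ht).comp y hsub).neg
      exact this.congr_deriv (by ring)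
    have := ((hasDerivAt_FWKernel y).mul d2).sub ((hasDerivAt_FWKd y).mul d1)
    exact this.congr_deriv (by ring)
  have hcont1 : Continuous (fun y => FWKernel y * uxx (x - y) t) :=
    FWKernel_cont.mul ((slice_x huxxc ht).comp (continuous_const.sub continuous_id))
  have hcont2 : Continuous (fun y => FWKernel y * u (x - y) t) :=
    FWKernel_cont.mul ((slice_x huc ht).comp (continuous_const.sub continuous_id))
  have hint : ∫ y in (0:ℝ)..1,
      (FWKernel y * uxx (x - y) t - FWKernel y * u (x - y) t) = Φ 1 - Φ 0 :=
    integral_eq_sub_of_hasDerivAt hderiv ((hcont1.sub hcont2).intervalIntegrable 0 1)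
  rw [intervalIntegral.integral_sub (hcont1.intervalIntegrable 0 1)
    (hcont2.intervalIntegrable 0 1)] at hint
  have hux1 : ux (x - 1) t = ux x t := by
    have := (ux_periodic hper hux ht (x - 1)).symm; simpa using this
  have hu1 : u (x - 1) t = u x t := by
    have := (hper (x - 1) t ht).symm; simpa using this
  have hval : Φ 1 - Φ 0 = -(u x t) := by
    simp only [hΦdef, hux1, hu1, FWKernel_one_eq, FWKd_one, FWKd_zero, sub_zero, sub_self]
    ring
  rw [hval] at hint
  linarith [hint]

/-- L4: the nonlocal term bound. -/
lemma conv_bound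
    (huc : ContinuousOn (fun p : ℝ × ℝ => u p.1 p.2) (Set.univ ×ˢ Set.Ico 0 T))
    (hux : ∀ x : ℝ, ∀ t ∈ Set.Ico (0 : ℝ) T, HasDerivAt (fun x' => u x' t) (ux x t) x)
    (huxc : ContinuousOn (fun p : ℝ × ℝ => ux p.1 p.2) (Set.univ ×ˢ Set.Ico 0 T))
    {t : ℝ} (ht : t ∈ Ico (0:ℝ) T) {c : ℝ} (hc : ∀ z : ℝ, c ≤ ux z t) (x : ℝ) :
    (∫ y in (0:ℝ)..1, FWKernel y * u (x - y) t) - u x t ≤ -(c/2) := by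
  have hKi : IntervalIntegrable (fun y => FWKernel y * u (x - y) t) volume 0 1 :=
    (FWKernel_cont.mul ((slice_x huc ht).comp (continuous_const.sub continuous_id))).intervalIntegrable 0 1
  have hpt : ∀ y ∈ Icc (0:ℝ) 1,
      FWKernel y * u (x - y) t ≤ FWKernel y * u x t - c * (y * FWKernel y) := by
    intro y hy
    have hle : u (x - y) t ≤ u x t - c * y := by
      have hftc : ∫ z in (x - y)..x, ux z t = u x t - u (x - y) t := by
        apply integral_eq_sub_of_hasDerivAt (fun z _ => hux z t ht)
        exact ((slice_x huxc ht).intervalIntegrable _ _)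
      have hmono : ∫ z in (x - y)..x, (c:ℝ) ≤ ∫ z in (x - y)..x, ux z t := by
        apply intervalIntegral.integral_mono_on (by linarith [hy.1])
          (intervalIntegrable_const) ((slice_x huxc ht).intervalIntegrable _ _)
        exact fun z _ => hc z
      rw [intervalIntegral.integral_const, smul_eq_mul] at hmono
      rw [hftc] at hmono
      nlinarith
    have hK := (FWKernel_pos y).le
    nlinarith
  have hmono2 : ∫ y in (0:ℝ)..1, FWKernel y * u (x - y) t
      ≤ ∫ y in (0:ℝ)..1, (FWKernel y * u x t - c * (y * FWKernel y)) := by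
    apply intervalIntegral.integral_mono_on zero_le_one hKi _ _
    · exact ((FWKernel_cont.mul continuous_const).sub
        ((continuous_const.mul (continuous_id.mul FWKernel_cont)))).intervalIntegrable 0 1
    · exact hpt
  have hval : ∫ y in (0:ℝ)..1, (FWKernel y * u x t - c * (y * FWKernel y))
      = u x t - c/2 := by
    have i1 : IntervalIntegrable (fun y : ℝ => FWKernel y * u x t) volume 0 1 :=
      (FWKernel_cont.mul continuous_const).intervalIntegrable 0 1
    have i2 : IntervalIntegrable (fun y : ℝ => c * (y * FWKernel y)) volume 0 1 :=
      (continuous_const.mul (continuous_id.mul FWKernel_cont)).intervalIntegrable 0 1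
    rw [intervalIntegral.integral_sub i1 i2]
    rw [intervalIntegral.integral_mul_const, intervalIntegral.integral_const_mul]
    rw [integral_FWKernel, integral_id_mul_FWKernel]
    ring
  rw [hval] at hmono2
  linarith
end part2

noncomputable def FWv (u ux uxx : ℝ → ℝ → ℝ) (x τ : ℝ) : ℝ :=
  -(3/2)*(ux x τ)^2 - (3/2)*(u x τ * uxx x τ)
    + ((∫ y in (0:ℝ)..1, FWKernel y * u (x - y) τ) - u x τ)

section heavy
variable {T : ℝ} {u ux ut uxx : ℝ → ℝ → ℝ}

lemma conv_contOn
    (huc : ContinuousOn (fun p : ℝ × ℝ => u p.1 p.2) (Set.univ ×ˢ Set.Ico 0 T))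
    (x : ℝ) :
    ContinuousOn (fun τ => ∫ y in (0:ℝ)..1, FWKernel y * u (x - y) τ) (Ico (0:ℝ) T) := by
  intro t ht
  set t' : ℝ := (t + T)/2 with ht'def
  have htt' : t < t' := by simp only [ht'def]; linarith [ht.2]
  have ht'T : t' < T := by simp only [ht'def]; linarith [ht.2]
  have hcomp : IsCompact (Icc (x-1) x ×ˢ Icc (0:ℝ) t') := isCompact_Icc.prod isCompact_Icc
  have hsub : (Icc (x-1) x ×ˢ Icc (0:ℝ) t') ⊆ Set.univ ×ˢ Set.Ico 0 T :=
    fun p hp => ⟨trivial, hp.2.1, lt_of_le_of_lt hp.2.2 ht'T⟩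
  obtain ⟨C, hC⟩ := hcomp.exists_bound_of_continuousOn (huc.mono hsub)
  apply intervalIntegral.continuousWithinAt_of_dominated_interval
    (bound := fun _ => Real.exp 1 * C)
  · filter_upwards [self_mem_nhdsWithin] with τ hτ
    exact (FWKernel_cont.mul
      ((slice_x huc hτ).comp (continuous_const.sub continuous_id))).aestronglyMeasurable
  · have hmem : Ico (0:ℝ) T ∩ Iio t' ∈ 𝓝[Ico (0:ℝ) T] t :=
      inter_mem_nhdsWithin _ (Iio_mem_nhds htt')
    filter_upwards [hmem] with τ hτ
    refine Eventually.of_forall (fun y hy => ?_)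
    have hy' : y ∈ Ioc (0:ℝ) 1 := by rwa [uIoc_of_le zero_le_one] at hy
    have hmem2 : ((x - y, τ) : ℝ × ℝ) ∈ Icc (x-1) x ×ˢ Icc (0:ℝ) t' :=
      Set.mk_mem_prod ⟨by linarith [hy'.2], by linarith [hy'.1]⟩ ⟨hτ.1.1, hτ.2.le⟩
    have hb := hC _ hmem2
    rw [Real.norm_eq_abs] at hb ⊢
    rw [abs_mul, abs_of_pos (FWKernel_pos y)]
    exact mul_le_mul (FWKernel_le ⟨hy'.1.le, hy'.2⟩) hb (abs_nonneg _) (Real.exp_pos 1).le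
  · exact intervalIntegrable_const
  · refine Eventually.of_forall (fun y _ => ?_)
    exact (continuousWithinAt_const).mul ((slice_t huc (x - y)).continuousWithinAt ht)

lemma FWv_contOn
    (huc : ContinuousOn (fun p : ℝ × ℝ => u p.1 p.2) (Set.univ ×ˢ Set.Ico 0 T))
    (huxc : ContinuousOn (fun p : ℝ × ℝ => ux p.1 p.2) (Set.univ ×ˢ Set.Ico 0 T))
    (huxxc : ContinuousOn (fun p : ℝ × ℝ => uxx p.1 p.2) (Set.univ ×ˢ Set.Ico 0 T))
    (x : ℝ) :
    ContinuousOn (fun τ => FWv u ux uxx x τ) (Ico (0:ℝ) T) := by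
  unfold FWv
  have h1 := slice_t huxc x
  have h2 := slice_t huc x
  have h3 := slice_t huxxc x
  exact ((continuousOn_const.mul (h1.pow 2)).sub
    (continuousOn_const.mul (h2.mul h3))).add ((conv_contOn huc x).sub h2)

lemma key_integral
    (hper : ∀ x : ℝ, ∀ t ∈ Set.Ico (0 : ℝ) T, u (x + 1) t = u x t)
    (huc : ContinuousOn (fun p : ℝ × ℝ => u p.1 p.2) (Set.univ ×ˢ Set.Ico 0 T))
    (hux : ∀ x : ℝ, ∀ t ∈ Set.Ico (0 : ℝ) T, HasDerivAt (fun x' => u x' t) (ux x t) x)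
    (hut : ∀ x : ℝ, ∀ t ∈ Set.Ico (0 : ℝ) T,
      HasDerivWithinAt (fun t' => u x t') (ut x t) (Set.Ico 0 T) t)
    (huxc : ContinuousOn (fun p : ℝ × ℝ => ux p.1 p.2) (Set.univ ×ˢ Set.Ico 0 T))
    (hutc : ContinuousOn (fun p : ℝ × ℝ => ut p.1 p.2) (Set.univ ×ˢ Set.Ico 0 T))
    (heq : ∀ x : ℝ, ∀ t ∈ Set.Ico (0 : ℝ) T,
      ut x t + (3 / 2) * u x t * ux x t = ∫ y in (0:ℝ)..1, FWKernel y * ux (x - y) t)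
    (huxx : ∀ x : ℝ, ∀ t ∈ Set.Ico (0 : ℝ) T, HasDerivAt (fun x' => ux x' t) (uxx x t) x)
    (huxxc : ContinuousOn (fun p : ℝ × ℝ => uxx p.1 p.2) (Set.univ ×ˢ Set.Ico 0 T))
    {x s₁ s₂ : ℝ} (hs₁ : s₁ ∈ Ico (0:ℝ) T) (hs₂ : s₂ ∈ Ico (0:ℝ) T) (h12 : s₁ ≤ s₂) :
    ux x s₂ - ux x s₁ = ∫ τ in s₁..s₂, FWv u ux uxx x τ := by
  have hIccsub : Icc s₁ s₂ ⊆ Ico (0:ℝ) T :=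
    fun τ hτ => ⟨le_trans hs₁.1 hτ.1, lt_of_le_of_lt hτ.2 hs₂.2⟩
  -- Step 1: FTC in time
  have hstep1 : ∀ x' : ℝ, u x' s₂ - u x' s₁ = ∫ τ in s₁..s₂, ut x' τ := by
    intro x'
    have hco : ContinuousOn (fun τ => u x' τ) (Icc s₁ s₂) := (slice_t huc x').mono hIccsub
    have hderiv : ∀ τ ∈ Ioo s₁ s₂, HasDerivWithinAt (fun τ' => u x' τ') (ut x' τ) (Ioi τ) τ := by
      intro τ hτ
      have hτ' : τ ∈ Ico (0:ℝ) T := hIccsub ⟨hτ.1.le, hτ.2.le⟩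
      refine (hut x' τ hτ').mono_of_mem_nhdsWithin ?_
      exact Filter.mem_of_superset (Ioo_mem_nhdsGT_of_mem ⟨le_refl τ, hτ'.2⟩)
        (fun z hz => ⟨le_trans hτ'.1 hz.1.le, hz.2⟩)
    have hint : IntervalIntegrable (fun τ => ut x' τ) volume s₁ s₂ :=
      ((slice_t hutc x').mono hIccsub).intervalIntegrable_of_Icc h12
    exact (intervalIntegral.integral_eq_sub_of_hasDeriv_right_of_le h12 hco hderiv hint).symm
  -- bounds on a big compact set
  have hsubA : Icc (x-3) (x+1) ×ˢ Icc (0:ℝ) s₂ ⊆ Set.univ ×ˢ Set.Ico 0 T :=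
    fun p hp => ⟨trivial, hp.2.1, lt_of_le_of_lt hp.2.2 hs₂.2⟩
  have hcompA : IsCompact (Icc (x-3) (x+1) ×ˢ Icc (0:ℝ) s₂) := isCompact_Icc.prod isCompact_Icc
  obtain ⟨Cu, hCu⟩ := hcompA.exists_bound_of_continuousOn (huc.mono hsubA)
  obtain ⟨Cux, hCux⟩ := hcompA.exists_bound_of_continuousOn (huxc.mono hsubA)
  obtain ⟨Cuxx, hCuxx⟩ := hcompA.exists_bound_of_continuousOn (huxxc.mono hsubA)
  have hxmem : ((x, 0) : ℝ × ℝ) ∈ Icc (x-3) (x+1) ×ˢ Icc (0:ℝ) s₂ :=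
    Set.mk_mem_prod ⟨by linarith, by linarith⟩ ⟨le_refl 0, hs₂.1⟩
  have hCu0 : 0 ≤ Cu := le_trans (norm_nonneg _) (hCu _ hxmem)
  have hCux0 : 0 ≤ Cux := le_trans (norm_nonneg _) (hCux _ hxmem)
  have hCuxx0 : 0 ≤ Cuxx := le_trans (norm_nonneg _) (hCuxx _ hxmem)
  -- inner x-derivative of the convolution term
  have hinner : ∀ τ ∈ Ico (0:ℝ) T, ∀ x' : ℝ,
      HasDerivAt (fun x'' => ∫ y in (0:ℝ)..1, FWKernel y * ux (x'' - y) τ)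
        (∫ y in (0:ℝ)..1, FWKernel y * uxx (x' - y) τ) x' := by
    intro τ hτ x'
    obtain ⟨C', hC'⟩ := (isCompact_Icc (a := x'-2) (b := x'+1)).exists_bound_of_continuousOn
      ((slice_x huxxc hτ).continuousOn)
    refine (intervalIntegral.hasDerivAt_integral_of_dominated_loc_of_deriv_le
      (F := fun x'' y => FWKernel y * ux (x'' - y) τ)
      (F' := fun x'' y => FWKernel y * uxx (x'' - y) τ)
      (bound := fun _ => Real.exp 1 * C') (Metric.ball_mem_nhds _ one_pos) ?_ ?_ ?_ ?_ ?_ ?_).2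
    · refine Eventually.of_forall (fun x'' => ?_)
      exact (FWKernel_cont.mul
        ((slice_x huxc hτ).comp (continuous_const.sub continuous_id))).aestronglyMeasurable
    · exact (FWKernel_cont.mul
        ((slice_x huxc hτ).comp (continuous_const.sub continuous_id))).intervalIntegrable 0 1
    · exact (FWKernel_cont.mul
        ((slice_x huxxc hτ).comp (continuous_const.sub continuous_id))).aestronglyMeasurable
    · refine Eventually.of_forall (fun y hy => fun x'' hx'' => ?_)
      have hy' : y ∈ Ioc (0:ℝ) 1 := by rwa [uIoc_of_le zero_le_one] at hy
      rw [Metric.mem_ball, Real.dist_eq] at hx''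
      obtain ⟨hxa, hxb⟩ := abs_lt.mp hx''
      have hb := hC' (x'' - y) ⟨by linarith [hy'.2], by linarith [hy'.1]⟩
      rw [Real.norm_eq_abs] at hb ⊢
      rw [abs_mul, abs_of_pos (FWKernel_pos y)]
      exact mul_le_mul (FWKernel_le ⟨hy'.1.le, hy'.2⟩) hb (abs_nonneg _) (Real.exp_pos 1).le
    · exact intervalIntegrable_const
    · refine Eventually.of_forall (fun y _ => fun x'' _ => ?_)
      have := ((huxx (x'' - y) τ hτ).comp x'' ((hasDerivAt_id x'').sub_const y)).const_mul
        (FWKernel y)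
      simpa using this
  -- x-derivative of ut
  have hutderiv : ∀ τ ∈ Ico (0:ℝ) T, ∀ x' : ℝ,
      HasDerivAt (fun x'' => ut x'' τ) (FWv u ux uxx x' τ) x' := by
    intro τ hτ x'
    have hfun : (fun x'' => ut x'' τ)
        = fun x'' => (∫ y in (0:ℝ)..1, FWKernel y * ux (x'' - y) τ)
            - 3/2 * u x'' τ * ux x'' τ := by
      funext x''
      have := heq x'' τ hτ
      linarith
    rw [hfun]
    have h1 := hinner τ hτ x'
    have h2 : HasDerivAt (fun x'' => 3/2 * u x'' τ * ux x'' τ)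
        (3/2 * ux x' τ * ux x' τ + 3/2 * u x' τ * uxx x' τ) x' := by
      have := ((hux x' τ hτ).const_mul (3/2:ℝ)).mul (huxx x' τ hτ)
      exact this.congr_deriv (by ring)
    have h3 := h1.sub h2
    rw [conv_uxx_eq hper huc hux huxc huxx huxxc hτ x'] at h3
    refine h3.congr_deriv ?_
    unfold FWv
    ring
  -- Step 2: differentiate under the time integral
  have hG : HasDerivAt (fun x' => ∫ τ in s₁..s₂, ut x' τ)
      (∫ τ in s₁..s₂, FWv u ux uxx x τ) x := by
    refine (intervalIntegral.hasDerivAt_integral_of_dominated_loc_of_deriv_le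
      (F := fun x' τ => ut x' τ) (F' := fun x' τ => FWv u ux uxx x' τ) (x₀ := x)
      (bound := fun _ => 3/2*Cux^2 + 3/2*(Cu*Cuxx) + (Real.exp 1 * Cu + Cu))
      (Metric.ball_mem_nhds _ one_pos) ?_ ?_ ?_ ?_ ?_ ?_).2
    · exact Eventually.of_forall (fun x' =>
        ((slice_t hutc x').mono (uIoc_subset_uIcc.trans
          (by rw [uIcc_of_le h12]; exact hIccsub))).aestronglyMeasurable measurableSet_uIoc)
    · exact ((slice_t hutc x).mono hIccsub).intervalIntegrable_of_Icc h12
    · exact ((FWv_contOn huc huxc huxxc x).mono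
        (uIoc_subset_uIcc.trans (by rw [uIcc_of_le h12]; exact hIccsub))).aestronglyMeasurable
        measurableSet_uIoc
    · refine Eventually.of_forall (fun τ hτ => fun x' hx' => ?_)
      have hτ' : τ ∈ Icc s₁ s₂ := by
        rw [uIoc_of_le h12] at hτ; exact ⟨hτ.1.le, hτ.2⟩
      have hτT : τ ∈ Ico (0:ℝ) T := hIccsub hτ'
      rw [Metric.mem_ball, Real.dist_eq] at hx'
      obtain ⟨hx'1, hx'2⟩ := abs_lt.mp hx'
      have hmemx' : ((x', τ) : ℝ × ℝ) ∈ Icc (x-3) (x+1) ×ˢ Icc (0:ℝ) s₂ :=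
        Set.mk_mem_prod ⟨by linarith, by linarith⟩ ⟨le_trans hs₁.1 hτ'.1, hτ'.2⟩
      have bu := hCu _ hmemx'
      have bux := hCux _ hmemx'
      have buxx := hCuxx _ hmemx'
      rw [Real.norm_eq_abs] at bu bux buxx
      -- bound on the convolution term
      have hconv : ‖∫ y in (0:ℝ)..1, FWKernel y * u (x' - y) τ‖ ≤ Real.exp 1 * Cu := by
        have := intervalIntegral.norm_integral_le_of_norm_le_const
          (C := Real.exp 1 * Cu) (f := fun y => FWKernel y * u (x' - y) τ) (a := 0) (b := 1) ?_
        · simpa using this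
        · intro y hy
          have hy' : y ∈ Ioc (0:ℝ) 1 := by rwa [uIoc_of_le zero_le_one] at hy
          have hbm := hCu (x' - y, τ) (Set.mk_mem_prod ⟨by linarith [hy'.2], by linarith [hy'.1]⟩
            ⟨le_trans hs₁.1 hτ'.1, hτ'.2⟩)
          rw [Real.norm_eq_abs] at hbm ⊢
          rw [abs_mul, abs_of_pos (FWKernel_pos y)]
          exact mul_le_mul (FWKernel_le ⟨hy'.1.le, hy'.2⟩) hbm (abs_nonneg _) (Real.exp_pos 1).le
      rw [Real.norm_eq_abs] at hconv ⊢
      obtain ⟨hcv1, hcv2⟩ := abs_le.mp hconv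
      obtain ⟨bu1, bu2⟩ := abs_le.mp bu
      obtain ⟨bux1, bux2⟩ := abs_le.mp bux
      obtain ⟨buxx1, buxx2⟩ := abs_le.mp buxx
      have p1 : |u x' τ * uxx x' τ| ≤ Cu * Cuxx := by
        rw [abs_mul]; exact mul_le_mul bu buxx (abs_nonneg _) hCu0
      obtain ⟨p1a, p1b⟩ := abs_le.mp p1
      have p2 : (ux x' τ)^2 ≤ Cux^2 := by nlinarith
      have hq : 0 ≤ (ux x' τ)^2 := sq_nonneg _
      unfold FWv
      rw [abs_le]
      constructor <;> nlinarith
    · exact intervalIntegrable_const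
    · refine Eventually.of_forall (fun τ hτ => fun x' _ => ?_)
      have hτ' : τ ∈ Icc s₁ s₂ := by
        rw [uIoc_of_le h12] at hτ; exact ⟨hτ.1.le, hτ.2⟩
      exact hutderiv τ (hIccsub hτ') x'
  have hfun2 : (fun x' => ∫ τ in s₁..s₂, ut x' τ) = fun x' => u x' s₂ - u x' s₁ :=
    funext fun x' => (hstep1 x').symm
  rw [hfun2] at hG
  exact ((hux x s₂ hs₂).sub (hux x s₁ hs₁)).unique hG
end heavy

section part4
variable {T : ℝ} {u ux ut uxx : ℝ → ℝ → ℝ}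

/-- Continuity of the minimum function. -/
lemma m_contOn
    (huxc : ContinuousOn (fun p : ℝ × ℝ => ux p.1 p.2) (Set.univ ×ˢ Set.Ico 0 T)) :
    ContinuousOn (fun t => sInf ((fun x => ux x t) '' Icc (0:ℝ) 1)) (Ico (0:ℝ) T) := by
  intro t ht
  set m : ℝ → ℝ := fun t => sInf ((fun x => ux x t) '' Icc (0:ℝ) 1) with hmdef
  set t' : ℝ := (t + T)/2 with ht'def
  have htt' : t < t' := by simp only [ht'def]; linarith [ht.2]
  have ht'T : t' < T := by simp only [ht'def]; linarith [ht.2]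
  have hKc : IsCompact (Icc (0:ℝ) 1 ×ˢ Icc (0:ℝ) t') := isCompact_Icc.prod isCompact_Icc
  have hsub : (Icc (0:ℝ) 1 ×ˢ Icc (0:ℝ) t') ⊆ Set.univ ×ˢ Set.Ico 0 T :=
    fun p hp => ⟨trivial, hp.2.1, lt_of_le_of_lt hp.2.2 ht'T⟩
  have hunif := hKc.uniformContinuousOn_of_continuous (huxc.mono hsub)
  rw [Metric.uniformContinuousOn_iff] at hunif
  rw [Metric.continuousWithinAt_iff]
  intro ε hε
  obtain ⟨δ, hδ, hδ'⟩ := hunif (ε/2) (by linarith)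
  refine ⟨min δ (t' - t), lt_min hδ (by linarith), fun {s} hs hdist => ?_⟩
  rw [Real.dist_eq] at hdist
  have hst' : s ∈ Icc (0:ℝ) t' := ⟨hs.1, by
    have := abs_lt.mp (lt_of_lt_of_le hdist (min_le_right _ _)); linarith [this.1, this.2]⟩
  have hsT : s ∈ Ico (0:ℝ) T := ⟨hs.1, lt_of_le_of_lt hst'.2 ht'T⟩
  have hclose : ∀ x ∈ Icc (0:ℝ) 1, |ux x s - ux x t| < ε/2 := by
    intro x hx
    have h1 : ((x, s) : ℝ × ℝ) ∈ Icc (0:ℝ) 1 ×ˢ Icc (0:ℝ) t' := Set.mk_mem_prod hx hst'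
    have h2 : ((x, t) : ℝ × ℝ) ∈ Icc (0:ℝ) 1 ×ˢ Icc (0:ℝ) t' :=
      Set.mk_mem_prod hx ⟨ht.1, htt'.le⟩
    have hd : dist ((x, s) : ℝ × ℝ) ((x, t) : ℝ × ℝ) < δ := by
      rw [Prod.dist_eq]
      simp only [dist_self]
      rw [max_eq_right dist_nonneg, Real.dist_eq]
      exact lt_of_lt_of_le hdist (min_le_left _ _)
    have := hδ' _ h1 _ h2 hd
    rwa [Real.dist_eq] at this
  -- two-sided bound on m s - m t
  obtain ⟨xt, hxt, hxtval⟩ := exists_min huxc ht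
  obtain ⟨xs, hxs, hxsval⟩ := exists_min huxc hsT
  have hbdd_s : BddBelow ((fun x => ux x s) '' Icc (0:ℝ) 1) :=
    (isCompact_Icc.image_of_continuousOn ((slice_x huxc hsT).continuousOn)).bddBelow
  have hbdd_t : BddBelow ((fun x => ux x t) '' Icc (0:ℝ) 1) :=
    (isCompact_Icc.image_of_continuousOn ((slice_x huxc ht).continuousOn)).bddBelow
  have h1 : m s ≤ ux xt s := csInf_le hbdd_s (mem_image_of_mem _ hxt)
  have h2 : m t ≤ ux xs t := csInf_le hbdd_t (mem_image_of_mem _ hxs)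
  have hxtval' : ux xt t = m t := hxtval
  have hxsval' : ux xs s = m s := hxsval
  have c1 := hclose xt hxt
  have c2 := hclose xs hxs
  rw [Real.dist_eq]
  rw [abs_lt] at c1 c2 ⊢
  constructor
  · linarith [c2.1, c2.2]
  · linarith [c1.1, c1.2]

/-- The slope estimate for the minimum function. -/
lemma slope_est
    (hper : ∀ x : ℝ, ∀ t ∈ Set.Ico (0 : ℝ) T, u (x + 1) t = u x t)
    (huc : ContinuousOn (fun p : ℝ × ℝ => u p.1 p.2) (Set.univ ×ˢ Set.Ico 0 T))
    (hux : ∀ x : ℝ, ∀ t ∈ Set.Ico (0 : ℝ) T, HasDerivAt (fun x' => u x' t) (ux x t) x)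
    (hut : ∀ x : ℝ, ∀ t ∈ Set.Ico (0 : ℝ) T,
      HasDerivWithinAt (fun t' => u x t') (ut x t) (Set.Ico 0 T) t)
    (huxc : ContinuousOn (fun p : ℝ × ℝ => ux p.1 p.2) (Set.univ ×ˢ Set.Ico 0 T))
    (hutc : ContinuousOn (fun p : ℝ × ℝ => ut p.1 p.2) (Set.univ ×ˢ Set.Ico 0 T))
    (heq : ∀ x : ℝ, ∀ t ∈ Set.Ico (0 : ℝ) T,
      ut x t + (3 / 2) * u x t * ux x t = ∫ y in (0:ℝ)..1, FWKernel y * ux (x - y) t)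
    (huxx : ∀ x : ℝ, ∀ t ∈ Set.Ico (0 : ℝ) T, HasDerivAt (fun x' => ux x' t) (uxx x t) x)
    (huxxc : ContinuousOn (fun p : ℝ × ℝ => uxx p.1 p.2) (Set.univ ×ˢ Set.Ico 0 T))
    {t : ℝ} (ht : t ∈ Ico (0:ℝ) T) {r : ℝ}
    (hr : -(3/2) * (sInf ((fun x => ux x t) '' Icc (0:ℝ) 1))^2
      - (1/2) * (sInf ((fun x => ux x t) '' Icc (0:ℝ) 1)) < r) :
    ∃ᶠ z in 𝓝[>] t, slope (fun t => sInf ((fun x => ux x t) '' Icc (0:ℝ) 1)) t z < r := by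
  set m : ℝ → ℝ := fun t => sInf ((fun x => ux x t) '' Icc (0:ℝ) 1) with hmdef
  obtain ⟨x₀, hx₀, hx₀val'⟩ := exists_min huxc ht
  have hx₀val : ux x₀ t = m t := hx₀val'
  have hglob : ∀ z : ℝ, m t ≤ ux z t := fun z => ux_ge_sInf hper hux huxc ht z
  -- second derivative vanishes at the minimum
  have huxx0 : uxx x₀ t = 0 := by
    have hloc : IsLocalMin (fun x => ux x t) x₀ :=
      Filter.Eventually.of_forall (fun z => hx₀val.trans_le (hglob z))
    exact hloc.hasDerivAt_eq_zero (huxx x₀ t ht)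
  -- value bound for v at (x₀, t)
  have hv : FWv u ux uxx x₀ t ≤ -(3/2) * (m t)^2 - (1/2) * (m t) := by
    unfold FWv
    have hb := conv_bound huc hux huxc ht hglob x₀
    have hsq : (ux x₀ t)^2 = (m t)^2 := by rw [hx₀val]
    have hpr : u x₀ t * uxx x₀ t = 0 := by rw [huxx0]; ring
    rw [hsq, hpr]
    linarith [hb]
  have hmt : m t = sInf ((fun x => ux x t) '' Icc (0:ℝ) 1) := rfl
  have hsq2 : (m t)^2 = (sInf ((fun x => ux x t) '' Icc (0:ℝ) 1))^2 := by rw [hmt]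
  set r' : ℝ := ((-(3/2) * (m t)^2 - (1/2) * (m t)) + r)/2 with hr'def
  have hrr1 : FWv u ux uxx x₀ t < r' := by rw [hr'def]; linarith [hr, hmt, hsq2, hv]
  have hrr2 : r' < r := by rw [hr'def]; linarith [hr, hmt, hsq2]
  -- continuity of v in time gives a small interval where v < r'
  have hcv : ContinuousWithinAt (fun τ => FWv u ux uxx x₀ τ) (Ico (0:ℝ) T) t :=
    (FWv_contOn huc huxc huxxc x₀) t ht
  have hev : ∀ᶠ τ in 𝓝[Ico (0:ℝ) T] t, FWv u ux uxx x₀ τ < r' :=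
    hcv.eventually_lt continuousWithinAt_const hrr1
  rw [eventually_nhdsWithin_iff] at hev
  obtain ⟨η, hη, hηsub⟩ := Metric.eventually_nhds_iff_ball.mp hev
  set η' : ℝ := min η (T - t) with hη'def
  have hη'pos : 0 < η' := lt_min hη (by linarith [ht.2])
  have hsmall : ∀ z ∈ Ioo t (t + η'), slope m t z < r := by
    intro z hz
    have hzT : z ∈ Ico (0:ℝ) T := ⟨le_trans ht.1 hz.1.le, by
      have := hz.2; have : z < t + (T - t) := lt_of_lt_of_le this (by
        simp only [hη'def]; exact (add_le_add_iff_left t).mpr (min_le_right _ _))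
      linarith⟩
    have hvint : ∀ τ ∈ Icc t z, FWv u ux uxx x₀ τ < r' := by
      intro τ hτ
      have hτT : τ ∈ Ico (0:ℝ) T := ⟨le_trans ht.1 hτ.1, lt_of_le_of_lt hτ.2 hzT.2⟩
      apply hηsub
      · rw [Metric.mem_ball, Real.dist_eq, abs_lt]
        constructor
        · linarith [hτ.1]
        · have : τ ≤ z := hτ.2
          have : z < t + η' := hz.2
          have : η' ≤ η := min_le_left _ _
          linarith [hτ.2, hz.2]
      · exact hτT
    have hkey := key_integral hper huc hux hut huxc hutc heq huxx huxxc ht hzT hz.1.le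
      (x := x₀)
    have hvcont : ContinuousOn (fun τ => FWv u ux uxx x₀ τ) (Icc t z) :=
      (FWv_contOn huc huxc huxxc x₀).mono
        (fun τ hτ => ⟨le_trans ht.1 hτ.1, lt_of_le_of_lt hτ.2 hzT.2⟩)
    have hmono : ∫ τ in t..z, FWv u ux uxx x₀ τ ≤ ∫ τ in t..z, r' := by
      apply intervalIntegral.integral_mono_on hz.1.le
        (hvcont.intervalIntegrable_of_Icc hz.1.le) intervalIntegrable_const
      exact fun τ hτ => (hvint τ hτ).le
    rw [intervalIntegral.integral_const, smul_eq_mul] at hmono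
    have hbdd_z : BddBelow ((fun x => ux x z) '' Icc (0:ℝ) 1) :=
      (isCompact_Icc.image_of_continuousOn ((slice_x huxc hzT).continuousOn)).bddBelow
    have hmz : m z ≤ ux x₀ z := csInf_le hbdd_z (mem_image_of_mem _ hx₀)
    have hdiff : m z - m t ≤ r' * (z - t) := by
      have := hkey
      rw [← hx₀val]
      calc m z - ux x₀ t ≤ ux x₀ z - ux x₀ t := by linarith
        _ = ∫ τ in t..z, FWv u ux uxx x₀ τ := hkey
        _ ≤ r' * (z - t) := by linarith
    rw [slope_def_field]
    rw [div_lt_iff₀ (by linarith [hz.1] : (0:ℝ) < z - t)]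
    have : r' * (z - t) < r * (z - t) := by
      apply mul_lt_mul_of_pos_right hrr2 (by linarith [hz.1])
    linarith
  have hIoo : Ioo t (t + η') ∈ 𝓝[>] t := Ioo_mem_nhdsGT_of_mem ⟨le_refl t, by linarith⟩
  exact (Filter.eventually_iff_exists_mem.mpr ⟨_, hIoo, hsmall⟩).frequently
end part4

/-- Blow-up for the periodic Fornberg–Whitham equation: if
`min u₀' + max u₀' < -2/3` then the life span satisfies
`T ≤ 2 / (-3 min u₀' - 1)`. -/
theorem fw_blowup (T : ℝ) (hT : 0 < T) (u ux ut uxx utx : ℝ → ℝ → ℝ)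
    (hu : IsClassicalFWSolution T u ux ut)
    (huxx : ∀ x : ℝ, ∀ t ∈ Set.Ico (0 : ℝ) T,
      HasDerivAt (fun x' => ux x' t) (uxx x t) x)
    (hutx : ∀ x : ℝ, ∀ t ∈ Set.Ico (0 : ℝ) T,
      HasDerivWithinAt (fun t' => ux x t') (utx x t) (Set.Ico 0 T) t)
    (huxxc : ContinuousOn (fun p : ℝ × ℝ => uxx p.1 p.2) (Set.univ ×ˢ Set.Ico 0 T))
    (hutxc : ContinuousOn (fun p : ℝ × ℝ => utx p.1 p.2) (Set.univ ×ˢ Set.Ico 0 T))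
    (hinit : sInf ((fun x => ux x 0) '' Set.Icc (0 : ℝ) 1)
        + sSup ((fun x => ux x 0) '' Set.Icc (0 : ℝ) 1) < -(2 / 3)) :
    T ≤ 2 / (-3 * sInf ((fun x => ux x 0) '' Set.Icc (0 : ℝ) 1) - 1) := by
  obtain ⟨huc, hper, hux, hut, huxc, hutc, heq⟩ := hu
  set m : ℝ → ℝ := fun t => sInf ((fun x => ux x t) '' Icc (0:ℝ) 1) with hmdef
  have hmapp : ∀ s : ℝ, sInf ((fun x => ux x s) '' Icc (0:ℝ) 1) = m s := fun _ => rfl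
  have h0T : (0:ℝ) ∈ Ico (0:ℝ) T := ⟨le_refl 0, hT⟩
  -- the max of ux(·,0) is nonnegative
  have hint0 : ∫ x in (0:ℝ)..1, ux x 0 = 0 := by
    rw [integral_eq_sub_of_hasDerivAt (fun x _ => hux x 0 h0T)
      ((slice_x huxc h0T).intervalIntegrable 0 1)]
    have h01 : u 1 0 = u 0 0 := by
      have := hper 0 0 h0T; norm_num at this; exact this
    rw [h01, sub_self]
  have hM0 : 0 ≤ sSup ((fun x => ux x 0) '' Icc (0:ℝ) 1) := by
    have hbddA : BddAbove ((fun x => ux x 0) '' Icc (0:ℝ) 1) :=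
      (isCompact_Icc.image_of_continuousOn ((slice_x huxc h0T).continuousOn)).bddAbove
    have hle : ∀ x ∈ Icc (0:ℝ) 1, ux x 0 ≤ sSup ((fun x => ux x 0) '' Icc (0:ℝ) 1) :=
      fun x hx => le_csSup hbddA (mem_image_of_mem _ hx)
    have hmono : ∫ x in (0:ℝ)..1, ux x 0
        ≤ ∫ _ in (0:ℝ)..1, sSup ((fun x => ux x 0) '' Icc (0:ℝ) 1) := by
      apply intervalIntegral.integral_mono_on zero_le_one
        ((slice_x huxc h0T).intervalIntegrable 0 1) intervalIntegrable_const hle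
    rw [hint0, intervalIntegral.integral_const, smul_eq_mul] at hmono
    linarith
  have hm₀ : m 0 < -(2/3) := by
    have := hinit
    rw [hmapp 0] at this
    linarith
  -- setup for contradiction
  by_contra hcon
  push_neg at hcon
  -- (goal already folded)
  set Ts : ℝ := 2 / (-3 * m 0 - 1) with hTsdef
  set h₀ : ℝ := 3 * m 0 + 1 with hh₀def
  have hh₀ : h₀ < -1 := by rw [hh₀def]; linarith
  have hden : 0 < -3 * m 0 - 1 := by linarith
  have hTs_pos : 0 < Ts := div_pos two_pos hden
  have hTsT : Ts < T := hcon
  have hh₀Ts : h₀ * Ts = -2 := by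
    rw [hTsdef, hh₀def, ← mul_div_assoc, div_eq_iff (ne_of_gt hden)]
    ring
  have hIccTs : Icc (0:ℝ) Ts ⊆ Ico (0:ℝ) T := fun τ hτ => ⟨hτ.1, lt_of_le_of_lt hτ.2 hTsT⟩
  have hmc : ContinuousOn m (Icc (0:ℝ) Ts) := (m_contOn huxc).mono hIccTs
  obtain ⟨c, hc⟩ : ∃ c, ∀ s ∈ Icc (0:ℝ) Ts, c ≤ m s := by
    obtain ⟨p, hp, hpmin⟩ := isCompact_Icc.exists_isMinOn (nonempty_Icc.mpr hTs_pos.le) hmc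
    exact ⟨m p, fun s hs => hpmin hs⟩
  set δ : ℝ := min Ts (1/(1 + |3*c+1|)) with hδdef
  have hδpos : 0 < δ := lt_min hTs_pos (by positivity)
  have hδTs : δ ≤ Ts := min_le_left _ _
  set b : ℝ := Ts - δ with hbdef
  have hb0 : 0 ≤ b := by rw [hbdef]; linarith
  have hbTs : b < Ts := by rw [hbdef]; linarith
  have hbT : b < T := lt_trans hbTs hTsT
  have hh₀b : h₀ * b = -2 - h₀ * δ := by
    have h1 : h₀ * b = h₀ * Ts - h₀ * δ := by rw [hbdef]; ring
    rw [h1, hh₀Ts]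
  have hdenpos : ∀ t ∈ Icc (0:ℝ) b, 0 < 2 + h₀ * t := by
    intro t ht'
    have h₀neg : h₀ < 0 := by linarith
    have h1 : h₀ * b ≤ h₀ * t := mul_le_mul_of_nonpos_left ht'.2 h₀neg.le
    have h3 : 0 < (-h₀) * δ := mul_pos (by linarith) hδpos
    nlinarith
  set B : ℝ → ℝ := fun t => 2 * h₀ / (2 + h₀ * t) with hBdef
  set f : ℝ → ℝ := fun t => 3 * m t + 1 with hfdef
  have hBneg : ∀ t ∈ Icc (0:ℝ) b, B t < 0 := by
    intro t ht'
    rw [hBdef]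
    exact div_neg_of_neg_of_pos (by linarith) (hdenpos t ht')
  have hcomp : ∀ ⦃s⦄, s ∈ Icc (0:ℝ) b → f s ≤ B s := by
    refine image_le_of_liminf_slope_right_lt_deriv_boundary'
      (f' := fun t => -(9/2)*(m t)^2 - (3/2)*(m t)) (B' := fun t => -(1/2)*(B t)^2)
      ?_ ?_ ?_ ?_ ?_ ?_
    · -- continuity of f
      exact (continuousOn_const.mul (hmc.mono
        (Icc_subset_Icc le_rfl hbTs.le))).add continuousOn_const
    · -- slope estimate
      intro t ht' r hrr
      have htT : t ∈ Ico (0:ℝ) T := ⟨ht'.1, lt_trans ht'.2 hbT⟩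
      have hm1 : sInf ((fun x => ux x t) '' Icc (0:ℝ) 1) = m t := hmapp t
      have hm1sq : (sInf ((fun x => ux x t) '' Icc (0:ℝ) 1))^2 = (m t)^2 := by rw [hm1]
      have hs := slope_est hper huc hux hut huxc hutc heq huxx huxxc htT (r := r/3)
        (by linarith)
      have hgm : (fun t => sInf ((fun x => ux x t) '' Icc (0:ℝ) 1)) = m := rfl
      rw [hgm] at hs
      refine ((hs.and_eventually eventually_mem_nhdsWithin).mono ?_)
      rintro z ⟨hz1, hz2⟩
      have heq2 : slope f t z = 3 * slope m t z := by
        rw [slope_def_field, slope_def_field, hfdef]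
        ring
      rw [heq2]
      linarith
    · -- f 0 ≤ B 0
      have hB0 : B 0 = h₀ := by rw [hBdef]; norm_num
      have hf0 : f 0 = h₀ := by rw [hfdef, hh₀def]
      rw [hB0, hf0]
      done
    · -- continuity of B
      exact continuousOn_const.div
        (continuousOn_const.add (continuousOn_const.mul continuousOn_id))
        (fun t ht' => ne_of_gt (hdenpos t ht'))
    · -- derivative of B
      intro t ht'
      have hden' : 2 + h₀ * t ≠ 0 := ne_of_gt (hdenpos t ⟨ht'.1, ht'.2.le⟩)
      have hd : HasDerivAt (fun t : ℝ => 2 + h₀ * t) h₀ t := by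
        simpa using ((hasDerivAt_id t).const_mul h₀).const_add (2:ℝ)
      have hD := (hasDerivAt_const t (2*h₀)).div hd hden'
      have heqv : (0 * (2 + h₀*t) - 2*h₀*h₀)/(2 + h₀*t)^2 = -(1/2)*(B t)^2 := by
        rw [hBdef]
        field_simp
        ring
      rw [heqv] at hD
      exact hD.hasDerivWithinAt
    · -- Riccati bound
      intro t ht' hfB
      show -(9/2)*(m t)^2 - (3/2)*(m t) < -(1/2)*(B t)^2
      have hBn := hBneg t ⟨ht'.1, ht'.2.le⟩
      have hkey2 : -(9/2)*(m t)^2 - (3/2)*(m t) = -(1/2)*(f t)^2 + (f t)/2 := by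
        rw [hfdef]; ring
      rw [hkey2, hfB]
      linarith
  -- final contradiction
  have hfb := hcomp ⟨hb0, le_refl b⟩
  have hBb : B b = -2/δ := by
    have h2 : 2 + h₀ * b = -h₀ * δ := by rw [hh₀b]; ring
    show 2 * h₀ / (2 + h₀ * b) = -2/δ
    rw [h2]
    rw [div_eq_div_iff (by nlinarith) (ne_of_gt hδpos)]
    ring
  have hcb : c ≤ m b := hc b ⟨hb0, hbTs.le⟩
  have hfbval : f b = 3 * m b + 1 := rfl
  have hA : 0 ≤ |3*c+1| := abs_nonneg _
  have h1A : 0 < 1 + |3*c+1| := by linarith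
  have hδle : δ ≤ 1/(1+|3*c+1|) := min_le_right _ _
  have hmul := mul_le_mul_of_nonneg_left hδle h1A.le
  have hcanc : (1+|3*c+1|) * (1/(1+|3*c+1|)) = 1 := mul_one_div_cancel (ne_of_gt h1A)
  have hprod : (1+|3*c+1|) * δ ≤ 1 := by rw [hcanc] at hmul; exact hmul
  have hinv : -2/δ ≤ -2*(1+|3*c+1|) := by
    rw [div_le_iff₀ hδpos]
    nlinarith
  have habs : -(|3*c+1|) ≤ 3*c+1 := neg_abs_le _
  rw [hBb, hfbval] at hfb
  linarith
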